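/- Aristotle's Thesis is valid: for all a ∈ {0,1/2,1}, f¬(f→(f¬(a), a)) ≥ 1/2; and Boethius's Thesis is valid: for all a,c ∈ {0,1/2,1}, f→(f→(a,c), f¬(f→(a, f¬(c)))) ≥ 1/2. -/
import Mathlib

/-- The set of trivalent truth values {0, 1/2, 1} inside ℚ. -/
def Tri (x : ℚ) : Prop := x = 0 ∨ x = 1/2 ∨ x = 1

/-- Cooper conditional: f→(0,y)=1/2, f→(1,y)=y, f→(1/2,y)=y (on trivalent values). -/
def tcond (a b : ℚ) : ℚ := if a = 0 then 1/2 else b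

/-- Quasi-conjunction. -/
def tand (a b : ℚ) : ℚ :=
  if a = 0 ∨ b = 0 then 0 else if a = 1 ∨ b = 1 then 1 else 1/2

/-- Quasi-disjunction. -/
def tor (a b : ℚ) : ℚ :=
  if a = 1 ∨ b = 1 then 1 else if a = 0 ∨ b = 0 then 0 else 1/2

/-- Strong Kleene negation. -/
def tneg (a : ℚ) : ℚ := 1 - a

/-- Aristotle's Thesis and Boethius's Thesis are valid (take designated values). -/
theorem aristotle_boethius :
    (∀ a : ℚ, Tri a → 1/2 ≤ tneg (tcond (tneg a) a)) ∧
    (∀ a c : ℚ, Tri a → Tri c →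
      1/2 ≤ tcond (tcond a c) (tneg (tcond a (tneg c)))) := by
  constructor
  · rintro a (rfl | rfl | rfl) <;> norm_num [tneg, tcond]
  · rintro a c (rfl | rfl | rfl) (rfl | rfl | rfl) <;> norm_num [tneg, tcond]
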